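/- For any β ∈ ℝ, the ordinary differential equation (yη)'(y) + β (T₁𝔔[η])(y) = 0 for y ≥ 1, with initial value η(1) = β, has a unique global solution η : [1,∞) → ℝ. -/
import Mathlib


open MeasureTheory Set Filter Topology

noncomputable section

/-- Convolution of two real functions on `ℝ`. -/
def conv (f g : ℝ → ℝ) : ℝ → ℝ := fun x => ∫ y : ℝ, f y * g (x - y)

/-- `convPow f j` is the `(j+1)`-fold convolution power `f^{*(j+1)}`. -/
def convPow (f : ℝ → ℝ) : ℕ → ℝ → ℝ
  | 0 => f
  | j + 1 => conv f (convPow f j)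

/-- The mean-field nonlinearity `𝔔[f] = Σ_{j=1}^N p_j f^{*j}`. -/
def QQ (N : ℕ) (p : ℕ → ℝ) (f : ℝ → ℝ) : ℝ → ℝ :=
  fun x => ∑ j ∈ Finset.range N, p (j + 1) * convPow f j x

/-- The polynomial `Q(z) = Σ_{j=1}^N p_j z^j`. -/
def Qpoly (N : ℕ) (p : ℕ → ℝ) (z : ℝ) : ℝ :=
  ∑ j ∈ Finset.range N, p (j + 1) * z ^ (j + 1)

/-- The derivative `Q'(z) = Σ_{j=1}^N j p_j z^(j-1)`. -/
def Qderiv (N : ℕ) (p : ℕ → ℝ) (z : ℝ) : ℝ :=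
  ∑ j ∈ Finset.range N, p (j + 1) * (j + 1) * z ^ j

/-- The polynomial `Q` as a function on `ℂ`. -/
def Qc (N : ℕ) (p : ℕ → ℝ) (z : ℂ) : ℂ :=
  ∑ j ∈ Finset.range N, (p (j + 1) : ℂ) * z ^ (j + 1)

/-- The shift operator `(T₁ f)(y) = f (y-1)` for `y ≥ 2`, `0` otherwise. -/
def T1 (f : ℝ → ℝ) : ℝ → ℝ := fun y => if 2 ≤ y then f (y - 1) else 0

/-- The linear semigroup `(S_τ f)(y) = e^τ f(e^τ y)` for `y ≥ 1`, `0` otherwise. -/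
def Sop (τ : ℝ) (f : ℝ → ℝ) : ℝ → ℝ :=
  fun y => if 1 ≤ y then Real.exp τ * f (Real.exp τ * y) else 0

/-- `η ∈ ℙ`: a probability density on `(1,∞)`, extended by zero. -/
def MemP (η : ℝ → ℝ) : Prop :=
  (∀ᵐ x : ℝ ∂volume, x ≤ 1 → η x = 0) ∧ (∀ᵐ x : ℝ ∂volume, 0 ≤ η x) ∧
    Integrable η ∧ ∫ x : ℝ, η x = 1

/-- Weighted `L^p` norm `‖w‖_{p,γ} = ‖y^γ w‖_{L^p((1,∞))}`. -/
def wnorm (q γ : ℝ) (w : ℝ → ℝ) : ℝ :=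
  (∫ y in Ioi (1 : ℝ), (y ^ γ * |w y|) ^ q) ^ (1 / q)

/-- Membership in the weighted space `L^p_γ` on `(1,∞)`. -/
def MemW (q γ : ℝ) (w : ℝ → ℝ) : Prop :=
  AEStronglyMeasurable w (volume.restrict (Ioi 1)) ∧
    IntegrableOn (fun y => (y ^ γ * |w y|) ^ q) (Ioi 1)

/-- `η : [0,∞) → L¹((1,∞))` is a (continuous) global solution of the coarsening
integral equation `η(τ) = S_τ η₀ + ∫₀^τ β(s) S_{τ-s} T₁𝔔[η(s)] ds`, with trace `β`. -/
def SolvesCIE (N : ℕ) (p : ℕ → ℝ) (η₀ : ℝ → ℝ) (η : ℝ → ℝ → ℝ) (β : ℝ → ℝ) : Prop :=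
  (∀ τ, 0 ≤ τ → IntegrableOn (η τ) (Ioi 1)) ∧
  (∀ τ, 0 ≤ τ → ∀ᵐ y : ℝ ∂volume, y ≤ 1 → η τ y = 0) ∧
  (∀ τ₀, 0 ≤ τ₀ →
    Tendsto (fun τ => ∫ y in Ioi (1 : ℝ), |η τ y - η τ₀ y|) (𝓝[Ici 0] τ₀) (𝓝 0)) ∧
  LocallyIntegrableOn β (Ici 0) ∧
  (∀ τ₀, 0 ≤ τ₀ → ∀ᵐ σ ∂volume.restrict (Icc 0 (Real.log 2)),
    β (τ₀ + σ) = Real.exp σ * η τ₀ (Real.exp σ)) ∧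
  (∀ τ, 0 ≤ τ → ∀ᵐ y : ℝ ∂volume, 1 < y →
    η τ y = Sop τ η₀ y + ∫ s in Ioc (0 : ℝ) τ, β s * Sop (τ - s) (T1 (QQ N p (η s))) y)

/-- Fourier transform of a function supported in `[1,∞)`, at a point of the
closed lower half-plane. -/
def fourierL (f : ℝ → ℝ) (ξ : ℂ) : ℂ :=
  ∫ x in Ioi (1 : ℝ), Complex.exp (-(Complex.I * ξ * (x : ℂ))) * (f x : ℂ)

/-- `w = 𝒩(ρ)`: `w` is a nonnegative locally integrable function on `[1,∞)`
(extended by zero) whose Fourier transform on the open lower half-plane equals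
`φ (ρ̂)`. -/
def IsN (φ : ℂ → ℂ) (ρ w : ℝ → ℝ) : Prop :=
  LocallyIntegrableOn w (Ici 1) ∧
  (∀ᵐ x : ℝ ∂volume, 0 ≤ w x) ∧ (∀ᵐ x : ℝ ∂volume, x < 1 → w x = 0) ∧
  ∀ ξ : ℂ, ξ.im < 0 →
    IntegrableOn (fun x : ℝ => Complex.exp (-(Complex.I * ξ * (x : ℂ))) * (w x : ℂ)) (Ioi 1) ∧
    fourierL w ξ = φ (fourierL ρ ξ)

/-- `η` is the global solution of the stationary ODE `(yη)'(y) + β (T₁𝔔[η])(y) = 0`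
on `[1,∞)` with `η(1) = β`, written in integrated form. -/
def IsODESol (N : ℕ) (p : ℕ → ℝ) (β : ℝ) (η : ℝ → ℝ) : Prop :=
  (∀ x, x < 1 → η x = 0) ∧ ContinuousOn η (Ici 1) ∧
  ∀ y, 1 ≤ y → y * η y = β - β * ∫ t in Icc (1 : ℝ) y, T1 (QQ N p η) t

/-- `w*(y) = 1/y` for `y ≥ 1`, `0` otherwise. -/
def wstar : ℝ → ℝ := fun y => if 1 ≤ y then 1 / y else 0

/-- The constant `κ = exp ∫₀¹ (1/(1-z) - q/(1-Q(z))) dz`. -/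
def kappa (N : ℕ) (p : ℕ → ℝ) : ℝ :=
  Real.exp (∫ z in (0 : ℝ)..1, (1 / (1 - z) - Qderiv N p 1 / (1 - Qpoly N p z)))

/-! ### Auxiliary lemmas for the well-posedness proof -/

section Aux

lemma convPow_zero_of_lt (f : ℝ → ℝ) (hf : ∀ x, x < 1 → f x = 0) :
    ∀ j : ℕ, ∀ x : ℝ, x < (j : ℝ) + 1 → convPow f j x = 0 := by
  intro j
  induction j with
  | zero =>
    intro x hx
    have : x < 1 := by simpa using hx
    exact hf x this
  | succ j ih =>
    intro x hx
    have hx' : x < (j : ℝ) + 2 := by push_cast at hx; linarith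
    show conv f (convPow f j) x = 0
    have h : ∀ y : ℝ, f y * convPow f j (x - y) = 0 := by
      intro y
      rcases lt_or_ge y 1 with h | h
      · rw [hf y h, zero_mul]
      · rw [ih (x - y) (by linarith), mul_zero]
    simp only [conv, h, integral_zero]

lemma convPow_congr (f g : ℝ → ℝ) (hf : ∀ x, x < 1 → f x = 0)
    (hg : ∀ x, x < 1 → g x = 0) (a : ℝ) (hfg : ∀ x, x ≤ a → f x = g x) :
    ∀ j : ℕ, ∀ x : ℝ, x ≤ a + j → convPow f j x = convPow g j x := by
  intro j
  induction j with
  | zero =>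
    intro x hx
    exact hfg x (by simpa using hx)
  | succ j ih =>
    intro x hx
    have hx' : x ≤ a + j + 1 := by push_cast at hx; linarith
    show conv f (convPow f j) x = conv g (convPow g j) x
    have h : ∀ s : ℝ, f s * convPow f j (x - s) = g s * convPow g j (x - s) := by
      intro s
      rcases lt_or_ge s 1 with h1 | h1
      · rw [hf s h1, hg s h1, zero_mul, zero_mul]
      · rcases lt_or_ge (x - s) ((j : ℝ) + 1) with h2 | h2
        · rw [convPow_zero_of_lt f hf j _ h2, convPow_zero_of_lt g hg j _ h2,
            mul_zero, mul_zero]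
        · rw [hfg s (by linarith), ih (x - s) (by linarith)]
    simp only [conv, h]

lemma QQ_congr (N : ℕ) (p : ℕ → ℝ) (f g : ℝ → ℝ) (hf : ∀ x, x < 1 → f x = 0)
    (hg : ∀ x, x < 1 → g x = 0) (a : ℝ) (hfg : ∀ x, x ≤ a → f x = g x) :
    ∀ x, x ≤ a → QQ N p f x = QQ N p g x := by
  intro x hx
  unfold QQ
  refine Finset.sum_congr rfl fun j _ => ?_
  rw [convPow_congr f g hf hg a hfg j x
    (hx.trans (le_add_of_nonneg_right (Nat.cast_nonneg j)))]

lemma T1QQ_congr (N : ℕ) (p : ℕ → ℝ) (f g : ℝ → ℝ) (hf : ∀ x, x < 1 → f x = 0)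
    (hg : ∀ x, x < 1 → g x = 0) (a : ℝ) (hfg : ∀ x, x ≤ a → f x = g x) :
    ∀ t, t ≤ a + 1 → T1 (QQ N p f) t = T1 (QQ N p g) t := by
  intro t ht
  simp only [T1]
  split_ifs with h2
  · exact QQ_congr N p f g hf hg a hfg (t - 1) (by linarith)
  · rfl

/-- The fixed-point map for the integrated ODE. -/
def Fmap (N : ℕ) (p : ℕ → ℝ) (β : ℝ) (f : ℝ → ℝ) : ℝ → ℝ :=
  fun y => if y < 1 then 0 else (β - β * ∫ t in Icc (1 : ℝ) y, T1 (QQ N p f) t) / y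

lemma Fmap_support (N : ℕ) (p : ℕ → ℝ) (β : ℝ) (f : ℝ → ℝ) :
    ∀ x, x < 1 → Fmap N p β f x = 0 := by
  intro x hx; simp [Fmap, hx]

lemma Fmap_congr (N : ℕ) (p : ℕ → ℝ) (β : ℝ) (f g : ℝ → ℝ) (hf : ∀ x, x < 1 → f x = 0)
    (hg : ∀ x, x < 1 → g x = 0) (a : ℝ) (hfg : ∀ x, x ≤ a → f x = g x) :
    ∀ y, y ≤ a + 1 → Fmap N p β f y = Fmap N p β g y := by
  intro y hy
  unfold Fmap
  split_ifs with h
  · rfl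
  · have : ∫ t in Icc (1 : ℝ) y, T1 (QQ N p f) t = ∫ t in Icc (1 : ℝ) y, T1 (QQ N p g) t :=
      setIntegral_congr_fun measurableSet_Icc fun t ht =>
        T1QQ_congr N p f g hf hg a hfg t (ht.2.trans hy)
    rw [this]

/-- The Picard-type iterates. -/
def etaIter (N : ℕ) (p : ℕ → ℝ) (β : ℝ) : ℕ → ℝ → ℝ :=
  fun n => (Fmap N p β)^[n] (fun _ => 0)

lemma etaIter_support (N : ℕ) (p : ℕ → ℝ) (β : ℝ) :
    ∀ n : ℕ, ∀ x : ℝ, x < 1 → etaIter N p β n x = 0 := by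
  intro n
  induction n with
  | zero => intro x _; rfl
  | succ n _ =>
    intro x hx
    show (Fmap N p β)^[n + 1] (fun _ => 0) x = 0
    rw [Function.iterate_succ_apply']
    exact Fmap_support N p β _ x hx

lemma etaIter_stab_succ (N : ℕ) (p : ℕ → ℝ) (β : ℝ) :
    ∀ n : ℕ, ∀ x : ℝ, x ≤ (n : ℝ) → etaIter N p β n x = etaIter N p β (n + 1) x := by
  intro n
  induction n with
  | zero =>
    intro x hx
    have hx1 : x < 1 := lt_of_le_of_lt (by simpa using hx) one_pos
    rw [etaIter_support N p β 0 x hx1, etaIter_support N p β 1 x hx1]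
  | succ n ih =>
    intro x hx
    have hx' : x ≤ (n : ℝ) + 1 := by push_cast at hx; linarith
    have h := Fmap_congr N p β (etaIter N p β n) (etaIter N p β (n + 1))
      (etaIter_support N p β n) (etaIter_support N p β (n + 1)) (n : ℝ) ih x hx'
    show (Fmap N p β)^[n + 1] (fun _ => 0) x = (Fmap N p β)^[n + 2] (fun _ => 0) x
    rw [Function.iterate_succ_apply', Function.iterate_succ_apply' (Fmap N p β) (n + 1)]
    exact h

lemma etaIter_stab (N : ℕ) (p : ℕ → ℝ) (β : ℝ) :
    ∀ n m : ℕ, n ≤ m → ∀ x : ℝ, x ≤ (n : ℝ) → etaIter N p β n x = etaIter N p β m x := by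
  intro n m hnm x hx
  induction m, hnm using Nat.le_induction with
  | base => rfl
  | succ m hm ih =>
    rw [ih, etaIter_stab_succ N p β m x (hx.trans (by exact_mod_cast hm))]

/-- The solution of the integrated ODE. -/
def etaSol (N : ℕ) (p : ℕ → ℝ) (β : ℝ) : ℝ → ℝ :=
  fun x => etaIter N p β ⌈x⌉₊ x

lemma etaSol_eq (N : ℕ) (p : ℕ → ℝ) (β : ℝ) :
    ∀ n : ℕ, ∀ x : ℝ, x ≤ (n : ℝ) → etaSol N p β x = etaIter N p β n x := by
  intro n x hx
  unfold etaSol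
  rcases le_total ⌈x⌉₊ n with h | h
  · exact etaIter_stab N p β _ n h x (Nat.le_ceil x)
  · exact (etaIter_stab N p β n _ h x hx).symm

lemma etaSol_support (N : ℕ) (p : ℕ → ℝ) (β : ℝ) :
    ∀ x, x < 1 → etaSol N p β x = 0 :=
  fun x hx => etaIter_support N p β _ x hx

lemma etaSol_fixed (N : ℕ) (p : ℕ → ℝ) (β : ℝ) :
    ∀ y : ℝ, etaSol N p β y = Fmap N p β (etaSol N p β) y := by
  intro y
  set n := ⌈y⌉₊ with hn
  have hy : y ≤ (n : ℝ) := Nat.le_ceil y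
  have h1 : etaSol N p β y = etaIter N p β (n + 1) y :=
    etaSol_eq N p β (n + 1) y (hy.trans (by push_cast; linarith))
  have h2 : etaIter N p β (n + 1) y = Fmap N p β (etaIter N p β n) y := by
    show (Fmap N p β)^[n + 1] (fun _ => 0) y = _
    rw [Function.iterate_succ_apply']
    rfl
  have h3 : Fmap N p β (etaIter N p β n) y = Fmap N p β (etaSol N p β) y :=
    Fmap_congr N p β _ _ (etaIter_support N p β n) (etaSol_support N p β) (n : ℝ)
      (fun x hx => (etaSol_eq N p β n x hx).symm) y (by linarith)
  rw [h1, h2, h3]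

lemma etaSol_ode (N : ℕ) (p : ℕ → ℝ) (β : ℝ) :
    ∀ y : ℝ, 1 ≤ y →
      y * etaSol N p β y = β - β * ∫ t in Icc (1 : ℝ) y, T1 (QQ N p (etaSol N p β)) t := by
  intro y hy
  have hy0 : y ≠ 0 := (lt_of_lt_of_le zero_lt_one hy).ne'
  rw [etaSol_fixed N p β y]
  unfold Fmap
  rw [if_neg (not_lt.mpr hy)]
  rw [mul_comm, div_mul_cancel₀ _ hy0]

lemma conv_eq_convolution (f g : ℝ → ℝ) :
    conv f g = MeasureTheory.convolution f g (ContinuousLinearMap.mul ℝ ℝ) volume := by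
  funext x
  simp [conv, MeasureTheory.convolution]

lemma integrable_conv {f g : ℝ → ℝ} (hf : Integrable f) (hg : Integrable g) :
    Integrable (conv f g) := by
  rw [conv_eq_convolution]
  exact Integrable.integrable_convolution (ContinuousLinearMap.mul ℝ ℝ) hf hg

lemma integrable_convPow {f : ℝ → ℝ} (hf : Integrable f) :
    ∀ j : ℕ, Integrable (convPow f j)
  | 0 => hf
  | j + 1 => integrable_conv hf (integrable_convPow hf j)

lemma integrable_QQ (N : ℕ) (p : ℕ → ℝ) {f : ℝ → ℝ} (hf : Integrable f) :
    Integrable (QQ N p f) := by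
  unfold QQ
  exact integrable_finset_sum _ fun j _ => (integrable_convPow hf j).const_mul _

lemma integrable_T1 {f : ℝ → ℝ} (hf : Integrable f) : Integrable (T1 f) := by
  have h : T1 f = Set.indicator (Ici (2 : ℝ)) (fun y => f (y - 1)) := by
    funext y
    simp [T1, Set.indicator, mem_Ici]
  rw [h]
  exact (hf.comp_sub_right 1).indicator measurableSet_Ici

lemma etaSol_contOn (N : ℕ) (p : ℕ → ℝ) (β : ℝ) :
    ∀ n : ℕ, ContinuousOn (etaSol N p β) (Icc 1 ((n : ℝ) + 1)) := by
  intro n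
  induction n with
  | zero =>
    have h : Icc (1 : ℝ) (((0 : ℕ) : ℝ) + 1) = {1} := by norm_num
    rw [h]
    exact continuousOn_singleton _ _
  | succ n ih =>
    have hs : Icc (1 : ℝ) (((n + 1 : ℕ) : ℝ) + 1) = Icc 1 ((n : ℝ) + 2) := by
      push_cast; ring_nf
    rw [hs]
    set M := Set.indicator (Icc (1 : ℝ) ((n : ℝ) + 1)) (etaSol N p β) with hM
    have hMsupp : ∀ x, x < 1 → M x = 0 := by
      intro x hx
      apply Set.indicator_of_notMem
      simp only [mem_Icc, not_and]
      intro h; linarith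
    have hmeq : ∀ x, x ≤ (n : ℝ) + 1 → etaSol N p β x = M x := by
      intro x hx
      rcases lt_or_ge x 1 with h | h
      · rw [etaSol_support N p β x h, hMsupp x h]
      · exact (Set.indicator_of_mem (Set.mem_Icc.mpr ⟨h, hx⟩) _).symm
    have hMint : Integrable M :=
      (ih.integrableOn_Icc).integrable_indicator measurableSet_Icc
    have hg' : Integrable (T1 (QQ N p M)) := integrable_T1 (integrable_QQ N p hMint)
    have hcongr : ∀ t, t ≤ (n : ℝ) + 2 →
        T1 (QQ N p (etaSol N p β)) t = T1 (QQ N p M) t := by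
      intro t ht
      exact T1QQ_congr N p _ _ (etaSol_support N p β) hMsupp ((n : ℝ) + 1) hmeq t
        (by linarith)
    have heq : EqOn (etaSol N p β)
        (fun y => (β - β * ∫ t in Ioc (1 : ℝ) y, T1 (QQ N p M) t) / y)
        (Icc 1 ((n : ℝ) + 2)) := by
      intro y hy
      rw [etaSol_fixed N p β y]
      unfold Fmap
      rw [if_neg (not_lt.mpr hy.1)]
      have : ∫ t in Icc (1 : ℝ) y, T1 (QQ N p (etaSol N p β)) t
          = ∫ t in Ioc (1 : ℝ) y, T1 (QQ N p M) t := by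
        rw [setIntegral_congr_fun measurableSet_Icc
          (fun t ht => hcongr t (le_trans ht.2 hy.2))]
        exact integral_Icc_eq_integral_Ioc
      rw [this]
    have hc : ContinuousOn
        (fun y => (β - β * ∫ t in Ioc (1 : ℝ) y, T1 (QQ N p M) t) / y)
        (Icc 1 ((n : ℝ) + 2)) := by
      apply ContinuousOn.div
      · exact continuousOn_const.sub
          (continuousOn_const.mul (intervalIntegral.continuousOn_primitive hg'.integrableOn))
      · exact continuousOn_id
      · intro y hy
        exact (lt_of_lt_of_le zero_lt_one hy.1).ne'
    exact hc.congr heq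

lemma etaSol_contOn_Ici (N : ℕ) (p : ℕ → ℝ) (β : ℝ) :
    ContinuousOn (etaSol N p β) (Ici 1) := by
  intro y hy
  set n := ⌈y⌉₊ with hn
  have hy1 : y ≤ (n : ℝ) := Nat.le_ceil y
  have h := etaSol_contOn N p β n y ⟨hy, by linarith⟩
  apply h.mono_of_mem_nhdsWithin
  have h1 : Ici (1 : ℝ) ∩ Iio ((n : ℝ) + 1) ∈ 𝓝[Ici 1] y :=
    Filter.inter_mem self_mem_nhdsWithin
      (mem_nhdsWithin_of_mem_nhds (Iio_mem_nhds (by linarith)))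
  exact Filter.mem_of_superset h1 fun z hz => ⟨hz.1, le_of_lt hz.2⟩

lemma IsODESol_unique (N : ℕ) (p : ℕ → ℝ) (β : ℝ) (f g : ℝ → ℝ)
    (hf : IsODESol N p β f) (hg : IsODESol N p β g) : f = g := by
  obtain ⟨hf0, _, hfode⟩ := hf
  obtain ⟨hg0, _, hgode⟩ := hg
  have key : ∀ n : ℕ, ∀ x : ℝ, x ≤ (n : ℝ) + 1 → f x = g x := by
    intro n
    induction n with
    | zero =>
      intro x hx
      rcases lt_or_ge x 1 with h | h
      · rw [hf0 x h, hg0 x h]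
      · have hx1 : x = 1 := le_antisymm (by simpa using hx) h
        subst hx1
        have hz : ∀ u : ℝ → ℝ, ∫ t in Icc (1 : ℝ) 1, T1 (QQ N p u) t = 0 := by
          intro u
          rw [integral_Icc_eq_integral_Ioc, Set.Ioc_self, setIntegral_empty]
        have h1 := hfode 1 le_rfl
        have h2 := hgode 1 le_rfl
        rw [hz f] at h1
        rw [hz g] at h2
        have hf1 : f 1 = β := by linarith
        have hg1 : g 1 = β := by linarith
        rw [hf1, hg1]
    | succ n ih =>
      intro x hx
      have hx' : x ≤ (n : ℝ) + 2 := by push_cast at hx; linarith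
      rcases lt_or_ge x 1 with h | h
      · rw [hf0 x h, hg0 x h]
      · have h1 := hfode x h
        have h2 := hgode x h
        have hint : ∫ t in Icc (1 : ℝ) x, T1 (QQ N p f) t
            = ∫ t in Icc (1 : ℝ) x, T1 (QQ N p g) t :=
          setIntegral_congr_fun measurableSet_Icc fun t ht =>
            T1QQ_congr N p f g hf0 hg0 ((n : ℝ) + 1) ih t (by linarith [ht.2, hx'])
        have hmul : x * f x = x * g x := by rw [h1, h2, hint]
        exact mul_left_cancel₀ (lt_of_lt_of_le zero_lt_one h).ne' hmul
  funext x
  have hx : x ≤ (⌈x⌉₊ : ℝ) + 1 := by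
    have := Nat.le_ceil x; linarith
  exact key ⌈x⌉₊ x hx

end Aux

/-- **Lemma (well-posedness of the stationary ODE).**
For any `β ∈ ℝ`, the equation `(yη)'(y) + β (T₁𝔔[η])(y) = 0` for `y ≥ 1` with
`η(1) = β` (written here in integrated form) has a unique global solution
`η : [1,∞) → ℝ`, extended by zero below `1`. -/
theorem ODE_unique_global_solution
    (N : ℕ) (p : ℕ → ℝ) (hN : 1 ≤ N) (hp : ∀ j, 0 ≤ p j)
    (hpsum : ∑ j ∈ Finset.range N, p (j + 1) = 1) (β : ℝ) :
    ∃! η : ℝ → ℝ, IsODESol N p β η := by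
  have hsol : IsODESol N p β (etaSol N p β) :=
    ⟨etaSol_support N p β, etaSol_contOn_Ici N p β, etaSol_ode N p β⟩
  exact ⟨etaSol N p β, hsol, fun η' h' => IsODESol_unique N p β η' (etaSol N p β) h' hsol⟩

end
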